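/- arXiv:1403.1951 — 2 statements merged into one kernel-verified Lean document; each statement's English description precedes it below -/
import Mathlib

section
/- Let h : {x₁,…,xₙ}* → {a₁,…,a_k}* be a solution of rank n−1 of two word equations E and E', and let α ∈ ℕ^k. Then the vectors 𝒮_E(L(θ_α∘h)) and 𝒮_{E'}(L(θ_α∘h)) in ℚ(x)ⁿ are linearly dependent over the field of fractions ℚ(x) of ℤ[x]. -/
open scoped BigOperators

namespace WordEquations

/-- The set of letters occurring in the images of a (letter-image) morphism. -/
def alph {Ξ Δ : Type*} (h : Ξ → List Δ) : Set Δ := ⋃ x, {a | a ∈ h x}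

/-- `h` is a solution of the system `T` of word equations. -/
def IsSolution {Ξ A : Type*} (h : Ξ → List A) (T : Set (List Ξ × List Ξ)) : Prop :=
  ∀ e ∈ T, e.1.flatMap h = e.2.flatMap h

/-- `h` is a solution of the single word equation `E`. -/
def IsSolutionE {Ξ A : Type*} (h : Ξ → List A) (E : List Ξ × List Ξ) : Prop :=
  E.1.flatMap h = E.2.flatMap h

/-- `θ` is a renaming of letters on the set `S`: it maps each letter of `S` to a
single letter, injectively on `S`. -/
def IsRenamingOn {A B : Type*} (θ : A → List B) (S : Set A) : Prop :=
  (∀ a ∈ S, ∃ b, θ a = [b]) ∧ ∀ a₁ ∈ S, ∀ a₂ ∈ S, θ a₁ = θ a₂ → a₁ = a₂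

/-- `g` is a principal solution of `T`: whenever `g = θ ∘ g'` for a solution `g'`
(and a morphism `θ` non-erasing on `alph g'`), `θ` is a renaming of letters. -/
def IsPrincipalSolution {Ξ Δ : Type*} (g : Ξ → List Δ) (T : Set (List Ξ × List Ξ)) : Prop :=
  IsSolution g T ∧
  ∀ (Δ' : Type) (g' : Ξ → List Δ') (θ : Δ' → List Δ),
    IsSolution g' T → (∀ a ∈ alph g', θ a ≠ []) →
    (∀ x, g x = (g' x).flatMap θ) → IsRenamingOn θ (alph g')

/-- The vector `γ(h)_a = (|h(x₁)|_a, …, |h(xₙ)|_a) ∈ ℚⁿ`. -/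
def gamVec {n : ℕ} {Δ : Type*} [DecidableEq Δ] (h : Fin n → List Δ) (a : Δ) :
    Fin n → ℚ := fun j => ((h j).count a : ℚ)

/-- `Γ_h`, the ℚ-span of the vectors `γ(h)_a`. -/
noncomputable def GammaSpace {n : ℕ} {Δ : Type*} [DecidableEq Δ] (h : Fin n → List Δ) :
    Submodule ℚ (Fin n → ℚ) := Submodule.span ℚ (Set.range (gamVec h))

/-- The rank of a morphism: `dim Γ_h`. -/
noncomputable def morphRank {n : ℕ} {Δ : Type*} [DecidableEq Δ] (h : Fin n → List Δ) : ℕ :=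
  Module.finrank ℚ ↥(GammaSpace h)

/-- `Mℕ`: all finite nonempty sums `Σᵢ aᵢ αᵢ` with `aᵢ` positive integers and `αᵢ ∈ M`
(equivalently, nonempty finite sums of elements of `M` with repetitions). -/
def natSums {n : ℕ} (M : Set (Fin n → ℚ)) : Set (Fin n → ℚ) :=
  {v | ∃ l : List (Fin n → ℚ), l ≠ [] ∧ (∀ x ∈ l, x ∈ M) ∧ l.sum = v}

/-- `M ⊆ ℚⁿ` has rank `r`: the ℚ-span of `M` has dimension `r`, and `M` is not contained
in any finite union of `(r-1)`-dimensional subspaces of its span. -/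
def HasRank {n : ℕ} (M : Set (Fin n → ℚ)) (r : ℕ) : Prop :=
  Module.finrank ℚ ↥(Submodule.span ℚ M) = r ∧
  ∀ V : Finset (Submodule ℚ (Fin n → ℚ)),
    (∀ W ∈ V, W ≤ Submodule.span ℚ M ∧ Module.finrank ℚ ↥W + 1 = r) →
    ¬ M ⊆ ⋃ W ∈ V, (W : Set (Fin n → ℚ))

/-- The monomial `X^α = ∏ᵢ Xᵢ^{αᵢ}` in `ℤ[X₁,…,Xₙ]`. -/
noncomputable def Xpow {n : ℕ} (α : Fin n → ℕ) : MvPolynomial (Fin n) ℤ :=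
  ∏ i, MvPolynomial.X i ^ α i

/-- The polynomial `Σ_{a : w_a = j} ∏_{t<a} X_{w_t}` associated with one side of an equation. -/
noncomputable def sideS {n : ℕ} (w : List (Fin n)) (j : Fin n) : MvPolynomial (Fin n) ℤ :=
  ∑ a : Fin w.length, if w.get a = j then ((w.take (a : ℕ)).map MvPolynomial.X).prod else 0

/-- The polynomial `S_{E,x_j}` of the equation `E = (u,v)`. -/
noncomputable def SE {n : ℕ} (E : List (Fin n) × List (Fin n)) (j : Fin n) :
    MvPolynomial (Fin n) ℤ :=
  sideS E.1 j - sideS E.2 j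

/-- Evaluation `p ↦ p(β)`, induced by `Xᵢ ↦ x^{βᵢ}`. -/
noncomputable def evalAt {n : ℕ} (β : Fin n → ℕ) (p : MvPolynomial (Fin n) ℤ) : Polynomial ℤ :=
  MvPolynomial.eval₂ (Int.castRingHom (Polynomial ℤ)) (fun i => Polynomial.X ^ β i) p

/-- `λ⁺`, the positive part of an integer vector. -/
def lamPos {n : ℕ} (lam : Fin n → ℤ) : Fin n → ℕ := fun i => (lam i).toNat

/-- `λ⁻`, the negative part of an integer vector. -/
def lamNeg {n : ℕ} (lam : Fin n → ℤ) : Fin n → ℕ := fun i => (-(lam i)).toNat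

/-- The length type `L(θ_α ∘ h)` of the composition of `h` with the power morphism
`θ_α : aᵢ ↦ aᵢ^{αᵢ}`. -/
def powLenType {n k : ℕ} (α : Fin k → ℕ) (h : Fin n → List (Fin k)) : Fin n → ℕ :=
  fun x => ∑ a, α a * (h x).count a

/-- The field `ℚ(x)`, realized as the field of fractions of `ℤ[x]`. -/
noncomputable abbrev RatX : Type := FractionRing (Polynomial ℤ)

/-- The vector `𝒮_E(β) ∈ ℚ(x)ⁿ`. -/
noncomputable def SEvec {n : ℕ} (E : List (Fin n) × List (Fin n)) (β : Fin n → ℕ) :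
    Fin n → RatX :=
  fun j => algebraMap (Polynomial ℤ) RatX (evalAt β (SE E j))

/-- The set of exponents of the minimal monomials of `p` (exponents in the support of `p`
that are minimal with respect to the componentwise order). -/
noncomputable def minimalSupport {n : ℕ} (p : MvPolynomial (Fin n) ℤ) : Finset (Fin n →₀ ℕ) :=
  p.support.filter (fun β => ∀ β' ∈ p.support, β' ≤ β → β' = β)



/-! ### Auxiliary material for Statement 7 -/

section Aux

open Polynomial

variable {A : Type*} [DecidableEq A]

/-- position polynomial: sum of `X^p` over positions `p` where letter `a` occurs in `w`. -/
private noncomputable def Pw : List A → A → Polynomial ℤ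
  | [], _ => 0
  | b :: w, a => (if b = a then 1 else 0) + Polynomial.X * Pw w a

@[simp] private lemma Pw_nil (a : A) : Pw ([] : List A) a = 0 := rfl

private lemma Pw_cons (b : A) (w : List A) (a : A) :
    Pw (b :: w) a = (if b = a then 1 else 0) + Polynomial.X * Pw w a := rfl

private lemma Pw_append (w₁ w₂ : List A) (a : A) :
    Pw (w₁ ++ w₂) a = Pw w₁ a + Polynomial.X ^ w₁.length * Pw w₂ a := by
  induction w₁ with
  | nil => simp
  | cons b w ih =>
      simp only [List.cons_append, Pw_cons, ih, List.length_cons]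
      ring

private lemma Pw_eval_one (w : List A) (a : A) : (Pw w a).eval 1 = w.count a := by
  induction w with
  | nil => simp
  | cons b w ih =>
      simp only [Pw_cons, List.count_cons, eval_add, apply_ite (Polynomial.eval (1:ℤ)), eval_one,
        eval_zero, eval_mul, eval_X, one_mul, ih]
      push_cast
      rcases eq_or_ne b a with h | h
      · simp [h, add_comm]
      · simp [h, Ne.symm h]

private lemma sideS_nil {n : ℕ} (j : Fin n) : sideS ([] : List (Fin n)) j = 0 := by
  simp [sideS]

private lemma sideS_cons {n : ℕ} (j₀ : Fin n) (u : List (Fin n)) (j : Fin n) :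
    sideS (j₀ :: u) j = (if j₀ = j then 1 else 0) + MvPolynomial.X j₀ * sideS u j := by
  have h0 : sideS (j₀ :: u) j = ∑ a : Fin (u.length + 1),
      if (j₀ :: u).get a = j then (((j₀ :: u).take (a : ℕ)).map MvPolynomial.X).prod else 0 := rfl
  rw [h0, Fin.sum_univ_succ]
  simp only [List.get_cons_zero, List.take_zero, List.map_nil, List.prod_nil]
  congr 1
  rw [sideS, Finset.mul_sum]
  refine Finset.sum_congr rfl fun i _ => ?_
  simp only [Fin.val_succ, List.take_succ_cons, List.map_cons,
    List.prod_cons, mul_ite, mul_zero]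
  rfl

private lemma evalAt_hom {n : ℕ} (β : Fin n → ℕ) :
    evalAt β = (MvPolynomial.eval₂Hom (Int.castRingHom (Polynomial ℤ))
      (fun i => Polynomial.X ^ β i) : MvPolynomial (Fin n) ℤ →+* Polynomial ℤ) := rfl

private lemma keyB {n k : ℕ} (g : Fin n → List (Fin k)) (β : Fin n → ℕ)
    (hβ : ∀ j, β j = (g j).length) (u : List (Fin n)) (a : Fin k) :
    Pw (u.flatMap g) a = ∑ j, evalAt β (sideS u j) * Pw (g j) a := by
  induction u with
  | nil => simp [sideS_nil, evalAt, MvPolynomial.eval₂_zero]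
  | cons j₀ u ih =>
      rw [List.flatMap_cons, Pw_append, ih]
      have hstep : ∀ j, evalAt β (sideS (j₀ :: u) j)
          = (if j₀ = j then 1 else 0) + Polynomial.X ^ β j₀ * evalAt β (sideS u j) := by
        intro j
        rw [sideS_cons, evalAt_hom]
        simp only [map_add, map_mul, MvPolynomial.eval₂Hom_X']
        congr 1
        split <;> simp
      simp only [hstep, add_mul, Finset.sum_add_distrib, ite_mul, one_mul, zero_mul]
      rw [Finset.sum_ite_eq Finset.univ j₀ (fun j => Pw (g j) a)]
      simp [Finset.mul_sum, hβ j₀, mul_assoc]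

private lemma keyC {n k : ℕ} (g : Fin n → List (Fin k)) (β : Fin n → ℕ)
    (hβ : ∀ j, β j = (g j).length) (u v : List (Fin n))
    (huv : u.flatMap g = v.flatMap g) (a : Fin k) :
    ∑ j, evalAt β (SE (u, v) j) * Pw (g j) a = 0 := by
  have hu := keyB g β hβ u a
  have hv := keyB g β hβ v a
  have hsub : ∀ j, evalAt β (SE (u,v) j) = evalAt β (sideS u j) - evalAt β (sideS v j) := by
    intro j; rw [SE, evalAt_hom]; exact map_sub _ _ _
  simp only [hsub, sub_mul, Finset.sum_sub_distrib, ← hu, ← hv, huv, sub_self]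

/-- The morphism `a ↦ a^{α a}`. -/
private def rep {k : ℕ} (α : Fin k → ℕ) : Fin k → List (Fin k) := fun b => List.replicate (α b) b

private lemma count_flatMap_rep {k : ℕ} (α : Fin k → ℕ) (l : List (Fin k)) (a : Fin k) :
    (l.flatMap (rep α)).count a = α a * l.count a := by
  induction l with
  | nil => simp
  | cons b l ih =>
      rw [List.flatMap_cons, List.count_append, ih, List.count_cons, rep, List.count_replicate]
      rcases eq_or_ne a b with h | h
      · subst h; simp [mul_add]; ring
      · simp [h, Ne.symm h]

private lemma length_flatMap_rep {k : ℕ} (α : Fin k → ℕ) (l : List (Fin k)) :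
    (l.flatMap (rep α)).length = ∑ a, α a * l.count a := by
  induction l with
  | nil => simp
  | cons b l ih =>
      rw [List.flatMap_cons, List.length_append, ih, rep, List.length_replicate]
      simp only [List.count_cons, mul_add, Finset.sum_add_distrib, mul_ite, mul_one, mul_zero,
        beq_iff_eq]
      rw [Finset.sum_ite_eq Finset.univ b (fun a => α a)]
      simp [add_comm]

private lemma flatMap_flatMap' {A B C : Type*} (l : List A) (f : A → List B) (g : B → List C) :
    (l.flatMap f).flatMap g = l.flatMap (fun x => (f x).flatMap g) := by
  induction l with
  | nil => rfl
  | cons b l ih => simp [List.flatMap_cons, List.flatMap_append, ih]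

private noncomputable abbrev ι : Polynomial ℤ →+* RatX := algebraMap (Polynomial ℤ) RatX

private lemma ι_inj : Function.Injective ι := IsFractionRing.injective (Polynomial ℤ) RatX

/-- independence transfer: if evaluations at 1 are ℚ-independent, the images in `ℚ(x)` are
`ℚ(x)`-independent. -/
private lemma transfer {m n : ℕ} (p : Fin m → Fin n → Polynomial ℤ)
    (he : LinearIndependent ℚ (fun i => fun j => (((p i j).eval 1 : ℤ) : ℚ))) :
    LinearIndependent RatX (fun i => fun j => ι (p i j)) := by
  rw [Fintype.linearIndependent_iff] at he ⊢
  intro c hc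
  by_contra hne
  push_neg at hne
  obtain ⟨i₀, hi₀⟩ := hne
  obtain ⟨b, hb⟩ := IsLocalization.exist_integer_multiples
    (nonZeroDivisors (Polynomial ℤ)) Finset.univ c
  choose d hd using fun i => hb i (Finset.mem_univ i)
  have hbne : ι (b : Polynomial ℤ) ≠ 0 := by
    intro h
    exact nonZeroDivisors.coe_ne_zero b (ι_inj (by simpa using h))
  have hrel : ∀ j, ∑ i, d i * p i j = 0 := by
    intro j
    apply ι_inj
    rw [map_sum, map_zero]
    have hcj := congrFun hc j
    simp only [Finset.sum_apply, Pi.smul_apply, smul_eq_mul, Pi.zero_apply] at hcj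
    calc ∑ i, ι (d i * p i j) = ∑ i, (ι (b:Polynomial ℤ) * c i) * ι (p i j) := by
          refine Finset.sum_congr rfl fun i _ => ?_
          rw [map_mul, hd i, Algebra.smul_def]
      _ = ι (b:Polynomial ℤ) * ∑ i, c i * ι (p i j) := by
          rw [Finset.mul_sum]; exact Finset.sum_congr rfl fun i _ => (mul_assoc _ _ _)
      _ = 0 := by rw [hcj, mul_zero]
  have hd₀ : d i₀ ≠ 0 := by
    intro h
    apply hi₀
    have hh : ι (d i₀) = ι (b:Polynomial ℤ) * c i₀ := by rw [hd i₀, Algebra.smul_def]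
    rw [h, map_zero] at hh
    rcases mul_eq_zero.mp hh.symm with h' | h'
    · exact absurd h' hbne
    · exact h'
  classical
  set S : Finset (Fin m) := Finset.univ.filter (fun i => d i ≠ 0) with hS
  have hSne : S.Nonempty := ⟨i₀, by simp [hS, hd₀]⟩
  obtain ⟨i₁, hi₁S, hi₁min⟩ := S.exists_min_image (fun i => rootMultiplicity 1 (d i)) hSne
  set m₀ := rootMultiplicity 1 (d i₁) with hm₀
  have hdvd : ∀ i, (X - C (1:ℤ)) ^ m₀ ∣ d i := by
    intro i
    by_cases hdi : d i = 0
    · rw [hdi]; exact dvd_zero _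
    · have hiS : i ∈ S := by simp [hS, hdi]
      exact dvd_trans (pow_dvd_pow _ (hi₁min i hiS)) (Polynomial.pow_rootMultiplicity_dvd _ _)
  choose r hr using hdvd
  have hrel' : ∀ j, ∑ i, r i * p i j = 0 := by
    intro j
    have h1 : (X - C (1:ℤ)) ^ m₀ * ∑ i, r i * p i j = 0 := by
      rw [Finset.mul_sum, ← hrel j]
      refine Finset.sum_congr rfl fun i _ => ?_
      rw [hr i]; ring
    have h2 : ((X : Polynomial ℤ) - C 1) ^ m₀ ≠ 0 :=
      pow_ne_zero _ (X_sub_C_ne_zero 1)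
    exact (mul_eq_zero.mp h1).resolve_left h2
  have heval : ∀ j, ∑ i, (((r i).eval 1 : ℤ) : ℚ) * (((p i j).eval 1 : ℤ) : ℚ) = 0 := by
    intro j
    have h3 := congrArg (Polynomial.eval (1:ℤ)) (hrel' j)
    rw [eval_finset_sum, eval_zero] at h3
    simp only [eval_mul] at h3
    exact_mod_cast congrArg (fun z : ℤ => (z : ℚ)) h3
  have hz := he (fun i => (((r i).eval 1 : ℤ) : ℚ)) (by
    funext j
    simpa [Finset.sum_apply, smul_eq_mul] using heval j) i₁
  have hre : (r i₁).eval 1 = 0 := by exact_mod_cast hz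
  have hdvd1 : (X - C (1:ℤ)) ∣ r i₁ := dvd_iff_isRoot.mpr hre
  have hdvd2 : (X - C (1:ℤ)) ^ (m₀ + 1) ∣ d i₁ := by
    obtain ⟨s, hs⟩ := hdvd1
    exact ⟨s, by rw [hr i₁, hs]; ring⟩
  have hdi₁ : d i₁ ≠ 0 := by
    have h4 := hi₁S; simp [hS] at h4; exact h4
  have := (Polynomial.le_rootMultiplicity_iff hdi₁).mpr hdvd2
  omega

end Aux

/-- if `h` is a solution of rank `n-1` of `E` and `E'` and `α ∈ ℕ^k`
is positive, then `𝒮_E(L(θ_α∘h))` and `𝒮_{E'}(L(θ_α∘h))` are linearly dependent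
over `ℚ(x)`. -/
theorem SEvec_linearDependent {n k : ℕ} (h : Fin n → List (Fin k))
    (E E' : List (Fin n) × List (Fin n))
    (hE : IsSolutionE h E) (hE' : IsSolutionE h E')
    (hrank : morphRank h = n - 1)
    (α : Fin k → ℕ) (hα : ∀ a, 0 < α a) :
    ¬ LinearIndependent RatX ![SEvec E (powLenType α h), SEvec E' (powLenType α h)] := by
  classical
  intro hli
  rcases Nat.lt_or_ge n 2 with hn | hn
  · have h2 : Fintype.card (Fin 2) ≤ Module.finrank RatX (Fin n → RatX) :=
      hli.fintype_card_le_finrank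
    rw [Fintype.card_fin, Module.finrank_pi, Fintype.card_fin] at h2
    omega
  obtain ⟨g, hgdef⟩ : ∃ g : Fin n → List (Fin k), g = fun j => (h j).flatMap (rep α) :=
    ⟨_, rfl⟩
  set β := powLenType α h with hβdef
  have hβ : ∀ j, β j = (g j).length := by
    intro j
    rw [hβdef, hgdef, powLenType]
    exact (length_flatMap_rep α (h j)).symm
  have hsol : ∀ (u v : List (Fin n)), u.flatMap h = v.flatMap h →
      u.flatMap g = v.flatMap g := by
    intro u v huv
    rw [hgdef, ← flatMap_flatMap' u h (rep α), ← flatMap_flatMap' v h (rep α), huv]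
  have hgE : E.1.flatMap g = E.2.flatMap g := hsol _ _ hE
  have hgE' : E'.1.flatMap g = E'.2.flatMap g := hsol _ _ hE'
  -- the span of the `γ(g)ₐ` has dimension `n - 1`
  have hαQ : ∀ a : Fin k, ((α a : ℚ)) ≠ 0 := fun a => by
    exact_mod_cast (hα a).ne'
  have hgam : ∀ a, gamVec g a = (α a : ℚ) • gamVec h a := by
    intro a
    funext j
    simp only [gamVec, Pi.smul_apply, smul_eq_mul, hgdef]
    rw [count_flatMap_rep α (h j) a]
    push_cast
    ring
  have hVeq : Submodule.span ℚ (Set.range (gamVec g)) = GammaSpace h := by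
    rw [GammaSpace]
    apply le_antisymm
    · rw [Submodule.span_le]
      rintro _ ⟨a, rfl⟩
      rw [hgam a]
      exact Submodule.smul_mem _ _ (Submodule.subset_span ⟨a, rfl⟩)
    · rw [Submodule.span_le]
      rintro _ ⟨a, rfl⟩
      have h1 : gamVec h a = ((α a : ℚ))⁻¹ • gamVec g a := by
        rw [hgam a, smul_smul, inv_mul_cancel₀ (hαQ a), one_smul]
      rw [h1]
      exact Submodule.smul_mem _ _ (Submodule.subset_span ⟨a, rfl⟩)
  have hfr : Module.finrank ℚ ↥(Submodule.span ℚ (Set.range (gamVec g))) = n - 1 := by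
    rw [hVeq]; exact hrank
  -- choose an independent subfamily of size `n - 1`
  obtain ⟨s, hs_sub, hs_span, hs_li⟩ := exists_linearIndependent ℚ (Set.range (gamVec g))
  have hs_fin : s.Finite := (Set.finite_range (gamVec g)).subset hs_sub
  haveI := hs_fin.fintype
  have hs_card : Fintype.card s = n - 1 := by
    have h4 := finrank_span_set_eq_card hs_li
    rw [hs_span, hfr] at h4
    rw [← Set.toFinset_card]
    omega
  let e : Fin (n-1) ≃ s := (Fintype.equivFinOfCardEq hs_card).symm
  have hchoice : ∀ x : s, ∃ a : Fin k, gamVec g a = (x : Fin n → ℚ) := fun x => hs_sub x.2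
  choose sel hsel using hchoice
  -- independence over ℚ(x) of the corresponding rows
  have hQli : LinearIndependent RatX
      (fun i : Fin (n-1) => fun j => ι (Pw (g j) (sel (e i)))) := by
    apply transfer
    have hpe : (fun i : Fin (n-1) => fun j => (((Pw (g j) (sel (e i))).eval 1 : ℤ) : ℚ))
        = fun i : Fin (n-1) => ((e i : s) : Fin n → ℚ) := by
      funext i j
      rw [Pw_eval_one]
      have h5 := congrFun (hsel (e i)) j
      simp only [gamVec] at h5
      push_cast
      exact h5
    rw [hpe]
    exact hs_li.comp e e.injective
  -- the matrix of row vectors `Q a`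
  set M : Matrix (Fin k) (Fin n) RatX := Matrix.of fun a j => ι (Pw (g j) a) with hM
  have hrankM : n - 1 ≤ M.rank := by
    have h1 : M.rank = Module.finrank RatX ↥(Submodule.span RatX (Set.range M)) := by
      rw [← Matrix.rank_transpose, Matrix.rank_eq_finrank_span_cols]; rfl
    have h2 : Module.finrank RatX ↥(Submodule.span RatX
        (Set.range (fun i : Fin (n-1) => fun j => ι (Pw (g j) (sel (e i)))))) = n - 1 := by
      rw [finrank_span_eq_card hQli, Fintype.card_fin]
    have h3 : Submodule.span RatX
        (Set.range (fun i : Fin (n-1) => fun j => ι (Pw (g j) (sel (e i)))))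
        ≤ Submodule.span RatX (Set.range M) := by
      apply Submodule.span_mono
      rintro _ ⟨i, rfl⟩
      exact ⟨sel (e i), rfl⟩
    rw [h1, ← h2]
    exact Submodule.finrank_mono h3
  -- rank-nullity
  set W := LinearMap.ker M.mulVecLin with hW
  have hrn := LinearMap.finrank_range_add_finrank_ker M.mulVecLin
  rw [Module.finrank_pi, Fintype.card_fin] at hrn
  have hMrank : M.rank = Module.finrank RatX ↥(LinearMap.range M.mulVecLin) := rfl
  have hWfr : Module.finrank RatX ↥W ≤ 1 := by
    rw [hW]
    rw [hMrank] at hrankM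
    omega
  -- both `𝒮`-vectors lie in `W`
  have hmem : ∀ (E₀ : List (Fin n) × List (Fin n)), E₀.1.flatMap g = E₀.2.flatMap g →
      SEvec E₀ β ∈ W := by
    intro E₀ hE₀
    rw [hW, LinearMap.mem_ker]
    funext a
    have hkc := keyC g β hβ E₀.1 E₀.2 hE₀ a
    have hkc' : ι (∑ j, evalAt β (SE (E₀.1, E₀.2) j) * Pw (g j) a) = 0 := by
      rw [hkc, map_zero]
    rw [map_sum] at hkc'
    simp only [Matrix.mulVecLin_apply, Matrix.mulVec, dotProduct, Pi.zero_apply]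
    rw [← hkc']
    refine Finset.sum_congr rfl fun j _ => ?_
    rw [map_mul]
    show M a j * SEvec E₀ β j = ι (evalAt β (SE (E₀.1, E₀.2) j)) * ι (Pw (g j) a)
    rw [mul_comm]
    rfl
  have hv : ∀ t : Fin 2, (![SEvec E β, SEvec E' β] : Fin 2 → Fin n → RatX) t ∈ W := by
    intro t
    fin_cases t
    · exact hmem E hgE
    · exact hmem E' hgE'
  let v' : Fin 2 → W := fun t => ⟨(![SEvec E β, SEvec E' β] : Fin 2 → Fin n → RatX) t, hv t⟩
  have hcomp : W.subtype ∘ v' = ![SEvec E β, SEvec E' β] := by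
    funext t; rfl
  have hli' : LinearIndependent RatX v' :=
    LinearIndependent.of_comp W.subtype (by rw [hcomp]; exact hli)
  have h6 := hli'.fintype_card_le_finrank
  rw [Fintype.card_fin] at h6
  omega


end WordEquations
end

section
/- Let λ ∈ ℤⁿ ∖ {0} have coprime coefficients and let N ⊆ 𝒩(λ) ∩ ℕ₀ⁿ be a set of rank n−1. Then a polynomial p ∈ ℤ[X₁,…,Xₙ] satisfies p(γ) = 0 for all γ ∈ N if and only if X^{λ⁺} − X^{λ⁻} divides p. -/
open scoped BigOperators

namespace WordEquations

variable {n : ℕ}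

lemma xpow_add (a b : Fin n → ℕ) : Xpow (fun i => a i + b i) = Xpow a * Xpow b := by
  simp [Xpow, pow_add, Finset.prod_mul_distrib]

lemma xpow_coe (α : Fin n →₀ ℕ) : Xpow ⇑α = MvPolynomial.monomial α 1 := by
  rw [Xpow, ← MvPolynomial.prod_X_pow_eq_monomial]
  symm
  apply Finset.prod_subset (Finset.subset_univ _)
  intro i _ hi
  simp [Finsupp.notMem_support_iff.mp hi]

lemma evalAt_Xpow (γ : Fin n → ℕ) (a : Fin n → ℕ) :
    evalAt γ (Xpow a) = Polynomial.X ^ (∑ i, γ i * a i) := by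
  rw [Xpow, evalAt]
  rw [show (MvPolynomial.eval₂ (Int.castRingHom (Polynomial ℤ))
      (fun i => Polynomial.X ^ γ i) : MvPolynomial (Fin n) ℤ → Polynomial ℤ)
      = ⇑(MvPolynomial.eval₂Hom (Int.castRingHom (Polynomial ℤ)) (fun i => Polynomial.X ^ γ i))
    from rfl]
  rw [map_prod]
  simp only [map_pow, MvPolynomial.eval₂Hom_X']
  rw [← Finset.prod_pow_eq_pow_sum]
  congr 1; funext i; rw [← pow_mul, mul_comm (γ i)]

lemma evalAt_monomial (γ : Fin n → ℕ) (α : Fin n →₀ ℕ) (c : ℤ) :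
    evalAt γ (MvPolynomial.monomial α c) = Polynomial.C c * Polynomial.X ^ (∑ i, γ i * α i) := by
  rw [evalAt, MvPolynomial.eval₂_monomial, Finsupp.prod_pow]
  have h1 : ∀ i : Fin n, ((Polynomial.X : Polynomial ℤ) ^ γ i) ^ α i
      = Polynomial.X ^ (γ i * α i) := fun i => by rw [← pow_mul, mul_comm]
  simp only [h1]
  rw [Finset.prod_pow_eq_pow_sum]
  have h2 : ((Int.castRingHom (Polynomial ℤ)) c : Polynomial ℤ) = Polynomial.C c := by simp
  rw [h2]

lemma dvd_step (lam : Fin n → ℤ) (c c' : Fin n → ℕ) (h : ∀ i, (c' i : ℤ) = c i + lam i) :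
    (Xpow (lamPos lam) - Xpow (lamNeg lam)) ∣ Xpow c' - Xpow c := by
  refine ⟨Xpow (fun i => c i - lamNeg lam i), ?_⟩
  rw [sub_mul, ← xpow_add, ← xpow_add]
  congr 1
  · congr 1; funext i; have := h i; simp only [lamPos, lamNeg]; omega
  · congr 1; funext i; have := h i; simp only [lamNeg]; omega

lemma dvd_xpow_sub_xpow_nat (lam : Fin n → ℤ) (k : ℕ) :
    ∀ (α β : Fin n → ℕ), (∀ i, (α i : ℤ) = β i + (k : ℤ) * lam i) →
    (Xpow (lamPos lam) - Xpow (lamNeg lam)) ∣ Xpow α - Xpow β := by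
  induction k with
  | zero =>
    intro α β h
    have : α = β := funext fun i => by have := h i; omega
    rw [this, sub_self]; exact dvd_zero _
  | succ k ih =>
    intro α β h
    have hnn : ∀ i, (0:ℤ) ≤ (α i : ℤ) - lam i := by
      intro i
      rcases le_or_gt (lam i) 0 with h' | h'
      · have : (0:ℤ) ≤ (α i : ℤ) := Int.ofNat_nonneg _
        omega
      · have h2 : (0:ℤ) ≤ (k : ℤ) * lam i := mul_nonneg (Int.ofNat_nonneg _) h'.le
        have := h i
        have h3 : (0:ℤ) ≤ (β i : ℤ) := Int.ofNat_nonneg _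
        push_cast at this ⊢
        nlinarith
    set m : Fin n → ℕ := fun i => ((α i : ℤ) - lam i).toNat with hm
    have hmi : ∀ i, (m i : ℤ) = (α i : ℤ) - lam i := fun i => Int.toNat_of_nonneg (hnn i)
    have d1 : (Xpow (lamPos lam) - Xpow (lamNeg lam)) ∣ Xpow α - Xpow m :=
      dvd_step lam m α (fun i => by rw [hmi i]; ring)
    have d2 : (Xpow (lamPos lam) - Xpow (lamNeg lam)) ∣ Xpow m - Xpow β := by
      apply ih
      intro i
      have := h i
      rw [hmi i]
      push_cast at this ⊢
      linarith
    have := dvd_add d1 d2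
    simpa using this

lemma dvd_xpow_sub_xpow (lam : Fin n → ℤ) (α β : Fin n → ℕ) (k : ℤ)
    (h : ∀ i, (α i : ℤ) = β i + k * lam i) :
    (Xpow (lamPos lam) - Xpow (lamNeg lam)) ∣ Xpow α - Xpow β := by
  rcases le_or_gt 0 k with hk | hk
  · exact dvd_xpow_sub_xpow_nat lam k.toNat α β
      (fun i => by rw [Int.toNat_of_nonneg hk]; exact h i)
  · have := dvd_xpow_sub_xpow_nat lam (-k).toNat β α
      (fun i => by rw [Int.toNat_of_nonneg (by omega)]; have := h i; linarith)
    rw [← dvd_neg] at this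
    simpa using this





noncomputable def dotL (d : Fin n → ℚ) : (Fin n → ℚ) →ₗ[ℚ] ℚ := ∑ i, d i • LinearMap.proj i

lemma dotL_apply (d v : Fin n → ℚ) : dotL d v = ∑ i, d i * v i := by
  simp [dotL]

lemma dotL_single (d : Fin n → ℚ) (j : Fin n) : dotL d (Pi.single j 1) = d j := by
  simp [dotL_apply, Pi.single_apply, Finset.sum_ite_eq']

lemma finrank_range_eq_one {V : Type*} [AddCommGroup V] [Module ℚ V] [FiniteDimensional ℚ V]
    (f : V →ₗ[ℚ] ℚ) (v : V) (hv : f v ≠ 0) :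
    Module.finrank ℚ ↥(LinearMap.range f) = 1 := by
  have h1 : Module.finrank ℚ ↥(LinearMap.range f) ≤ 1 := by
    have := Submodule.finrank_le (LinearMap.range f)
    simpa using this
  have h2 : LinearMap.range f ≠ ⊥ := by
    intro h
    apply hv
    have : f v ∈ LinearMap.range f := LinearMap.mem_range_self f v
    rw [h, Submodule.mem_bot] at this
    exact this
  have h3 : Module.finrank ℚ ↥(LinearMap.range f) ≠ 0 := by
    intro h0
    exact h2 (Submodule.finrank_eq_zero.mp h0)
  omega

lemma rat_mul_int (lam : Fin n → ℤ) (hcop : Finset.univ.gcd lam = 1)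
    (d : Fin n → ℤ) (c : ℚ) (h : ∀ i, (d i : ℚ) = c * lam i) :
    ∃ k : ℤ, ∀ i, d i = k * lam i := by
  have hc : (c.num : ℚ) = c * (c.den : ℚ) := by
    exact_mod_cast (Rat.mul_den_eq_num c).symm
  have hden : ∀ i, (c.den : ℤ) ∣ lam i := by
    intro i
    have h1 : ((c.num * lam i : ℤ) : ℚ) = ((d i * c.den : ℤ) : ℚ) := by
      push_cast
      linear_combination ((lam i : ℚ)) * hc - ((c.den : ℚ)) * (h i)
    have h2 : c.num * lam i = d i * c.den := by exact_mod_cast h1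
    have h3 : (c.den : ℤ) ∣ c.num * lam i := ⟨d i, by linarith⟩
    have hcp : IsCoprime (c.den : ℤ) c.num := by
      rw [Int.isCoprime_iff_gcd_eq_one]
      simpa [Int.gcd, Int.natAbs_natCast] using c.reduced.symm
    exact hcp.dvd_of_dvd_mul_left h3
  have hd1 : (c.den : ℤ) ∣ 1 := by rw [← hcop]; exact Finset.dvd_gcd fun i _ => hden i
  have hden1 : c.den = 1 := by exact_mod_cast Int.eq_one_of_dvd_one (by positivity) hd1
  have hcnum : (c.num : ℚ) = c := (Rat.den_eq_one_iff c).mp hden1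
  refine ⟨c.num, fun i => ?_⟩
  have : (d i : ℚ) = ((c.num * lam i : ℤ) : ℚ) := by push_cast; rw [hcnum]; exact h i
  exact_mod_cast this




lemma exists_separating (lam : Fin n → ℤ) (hne : lam ≠ 0)
    (hcop : Finset.univ.gcd lam = 1)
    (N : Set (Fin n → ℕ))
    (hN : ∀ γ ∈ N, ∑ i, lam i * (γ i : ℤ) = 0)
    (hrank : HasRank ((fun γ : Fin n → ℕ => fun i => ((γ i : ℕ) : ℚ)) '' N) (n - 1))
    (S : Finset (Fin n →₀ ℕ)) :
    ∃ γ ∈ N, ∀ α ∈ S, ∀ β ∈ S,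
      (∑ i, γ i * α i) = (∑ i, γ i * β i) →
      ∃ k : ℤ, ∀ i, (α i : ℤ) = (β i : ℤ) + k * lam i := by
  classical
  set M := ((fun γ : Fin n → ℕ => fun i => ((γ i : ℕ) : ℚ)) '' N) with hM
  set sM := Submodule.span ℚ M with hsM
  obtain ⟨i₀, hi₀⟩ := Function.ne_iff.mp hne
  simp only [Pi.zero_apply] at hi₀
  set lQ : Fin n → ℚ := fun i => (lam i : ℚ) with hlQ
  have hlQ0 : lQ i₀ ≠ 0 := by
    simp only [hlQ, ne_eq, Int.cast_eq_zero]
    exact hi₀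
  have hA : sM ≤ LinearMap.ker (dotL lQ) := by
    rw [hsM, Submodule.span_le]
    rintro _ ⟨γ, hγ, rfl⟩
    simp only [SetLike.mem_coe, LinearMap.mem_ker, dotL_apply, hlQ]
    exact_mod_cast hN γ hγ
  have hkerrank : Module.finrank ℚ ↥(LinearMap.ker (dotL lQ)) = n - 1 := by
    have hrn := LinearMap.finrank_range_add_finrank_ker (dotL lQ)
    rw [Module.finrank_fintype_fun_eq_card, Fintype.card_fin] at hrn
    have h1 : dotL lQ (Pi.single i₀ 1) ≠ 0 := by rw [dotL_single]; exact hlQ0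
    have := finrank_range_eq_one (dotL lQ) _ h1
    omega
  have hsMeq : sM = LinearMap.ker (dotL lQ) :=
    Submodule.eq_of_le_of_finrank_eq hA (hrank.1.trans hkerrank.symm)
  set dv : (Fin n →₀ ℕ) → (Fin n →₀ ℕ) → (Fin n → ℚ) :=
    fun α β i => (α i : ℚ) - (β i : ℚ) with hdv
  set P : (Fin n →₀ ℕ) → (Fin n →₀ ℕ) → Prop :=
    fun α β => ∃ k : ℤ, ∀ i, (α i : ℤ) = (β i : ℤ) + k * lam i with hP
  have claim1 : ∀ α β, ¬ P α β → ∃ v ∈ sM, dotL (dv α β) v ≠ 0 := by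
    intro α β hnP
    by_contra hcon
    push_neg at hcon
    apply hnP
    have hprop : ∀ j, lQ i₀ * dv α β j - lQ j * dv α β i₀ = 0 := by
      intro j
      have hw : (lQ i₀ • (Pi.single j 1 : Fin n → ℚ) - lQ j • (Pi.single i₀ 1 : Fin n → ℚ)) ∈ sM := by
        rw [hsMeq]
        simp only [LinearMap.mem_ker, map_sub, map_smul, smul_eq_mul, dotL_single]
        ring
      have := hcon _ hw
      rw [map_sub, map_smul, map_smul, dotL_single, dotL_single, smul_eq_mul,
        smul_eq_mul] at this
      exact this
    have hdij : ∀ j, ((fun i => (α i : ℤ) - (β i : ℤ)) j : ℚ)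
        = (dv α β i₀ / lQ i₀) * lam j := by
      intro j
      have h0 := hprop j
      have : dv α β j = (dv α β i₀ / lQ i₀) * lQ j := by
        field_simp
        linarith [h0]
      simp only [hdv] at this
      push_cast
      simpa [hlQ] using this
    obtain ⟨k, hk⟩ := rat_mul_int lam hcop _ _ hdij
    exact ⟨k, fun i => by have := hk i; omega⟩
  have claim2 : ∀ α β, ¬ P α β →
      (sM ⊓ LinearMap.ker (dotL (dv α β)) ≤ sM ∧
       Module.finrank ℚ ↥(sM ⊓ LinearMap.ker (dotL (dv α β))) + 1 = n - 1) := by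
    intro α β hnP
    refine ⟨inf_le_left, ?_⟩
    obtain ⟨v, hvM, hv0⟩ := claim1 α β hnP
    set f := (dotL (dv α β)).domRestrict sM with hf
    have hrn := LinearMap.finrank_range_add_finrank_ker f
    have hsMr : Module.finrank ℚ ↥sM = n - 1 := hrank.1
    have hr1 : Module.finrank ℚ ↥(LinearMap.range f) = 1 :=
      finrank_range_eq_one f ⟨v, hvM⟩ (by rwa [hf, LinearMap.domRestrict_apply])
    have hker : sM ⊓ LinearMap.ker (dotL (dv α β))
        = Submodule.map sM.subtype (LinearMap.ker f) := by
      rw [hf, LinearMap.ker_domRestrict, Submodule.map_comap_subtype]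
    rw [hker, Submodule.finrank_map_subtype_eq]
    omega
  set V : Finset (Submodule ℚ (Fin n → ℚ)) :=
    ((S ×ˢ S).filter (fun q => ¬ P q.1 q.2)).image
      (fun q => sM ⊓ LinearMap.ker (dotL (dv q.1 q.2))) with hV
  have hVcond : ∀ W ∈ V, W ≤ Submodule.span ℚ M ∧ Module.finrank ℚ ↥W + 1 = n - 1 := by
    intro W hW
    rw [hV, Finset.mem_image] at hW
    obtain ⟨q, hq, rfl⟩ := hW
    rw [Finset.mem_filter] at hq
    exact claim2 q.1 q.2 hq.2
  have hns := hrank.2 V hVcond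
  rw [Set.not_subset] at hns
  obtain ⟨m, hmM, hm⟩ := hns
  obtain ⟨γ, hγN, rfl⟩ := hmM
  refine ⟨γ, hγN, ?_⟩
  intro α hα β hβ hsum
  by_contra hnP
  apply hm
  have hWin : (sM ⊓ LinearMap.ker (dotL (dv α β))) ∈ V := by
    rw [hV, Finset.mem_image]
    exact ⟨(α, β), Finset.mem_filter.mpr ⟨Finset.mem_product.mpr ⟨hα, hβ⟩, hnP⟩, rfl⟩
  apply Set.mem_iUnion₂.mpr
  refine ⟨_, hWin, ?_⟩
  refine Submodule.mem_inf.mpr ⟨Submodule.subset_span ⟨γ, hγN, rfl⟩, ?_⟩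
  rw [LinearMap.mem_ker, dotL_apply]
  have hc : ((∑ i, γ i * α i : ℕ) : ℚ) = ((∑ i, γ i * β i : ℕ) : ℚ) := by
    exact_mod_cast congrArg (fun t : ℕ => (t : ℚ)) hsum
  push_cast at hc
  have : ∑ i, dv α β i * ((γ i : ℕ) : ℚ)
      = (∑ i, (γ i : ℚ) * (α i : ℚ)) - ∑ i, (γ i : ℚ) * (β i : ℚ) := by
    rw [← Finset.sum_sub_distrib]
    apply Finset.sum_congr rfl
    intro i _
    simp only [hdv]
    ring
  rw [this, hc, sub_self]

lemma exists_partner (γ : Fin n → ℕ) (p : MvPolynomial (Fin n) ℤ)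
    (hp : evalAt γ p = 0) (α₀ : Fin n →₀ ℕ) (hα₀ : α₀ ∈ p.support) :
    ∃ β ∈ p.support, β ≠ α₀ ∧ (∑ i, γ i * β i) = (∑ i, γ i * α₀ i) := by
  by_contra hcon
  push_neg at hcon
  have hco : (evalAt γ p).coeff (∑ i, γ i * α₀ i) = p.coeff α₀ := by
    rw [evalAt, MvPolynomial.eval₂_eq']
    rw [Polynomial.finset_sum_coeff]
    have hterm : ∀ d : Fin n →₀ ℕ,
        ((Int.castRingHom (Polynomial ℤ)) (p.coeff d)
          * ∏ i, (Polynomial.X ^ γ i) ^ d i).coeff (∑ i, γ i * α₀ i)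
        = if (∑ i, γ i * d i) = (∑ i, γ i * α₀ i) then p.coeff d else 0 := by
      intro d
      have h1 : ((Int.castRingHom (Polynomial ℤ)) (p.coeff d) : Polynomial ℤ)
          = Polynomial.C (p.coeff d) := by simp
      have h2 : ∀ i : Fin n, ((Polynomial.X : Polynomial ℤ) ^ γ i) ^ d i
          = Polynomial.X ^ (γ i * d i) := fun i => by rw [← pow_mul, mul_comm]
      simp only [h1, h2, Finset.prod_pow_eq_pow_sum, Polynomial.coeff_C_mul,
        Polynomial.coeff_X_pow]
      by_cases h : (∑ i, γ i * d i) = (∑ i, γ i * α₀ i)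
      · rw [if_pos h, if_pos h.symm, mul_one]
      · rw [if_neg h, if_neg (fun hh => h hh.symm), mul_zero]
    rw [Finset.sum_congr rfl (fun d _ => hterm d)]
    rw [Finset.sum_eq_single_of_mem α₀ hα₀]
    · rw [if_pos rfl]
    · intro d hd hdne
      rw [if_neg]
      intro hh
      exact hdne (by
        by_contra hne2
        exact absurd hh ((hcon d hd hne2)))
  rw [hp, Polynomial.coeff_zero] at hco
  exact (MvPolynomial.mem_support_iff.mp hα₀) hco.symm

lemma forward_dvd (lam : Fin n → ℤ) (hne : lam ≠ 0)
    (hcop : Finset.univ.gcd lam = 1)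
    (N : Set (Fin n → ℕ))
    (hN : ∀ γ ∈ N, ∑ i, lam i * (γ i : ℤ) = 0)
    (hrank : HasRank ((fun γ : Fin n → ℕ => fun i => ((γ i : ℕ) : ℚ)) '' N) (n - 1)) :
    ∀ (m : ℕ) (p : MvPolynomial (Fin n) ℤ), p.support.card ≤ m →
      (∀ γ ∈ N, evalAt γ p = 0) →
      (Xpow (lamPos lam) - Xpow (lamNeg lam)) ∣ p := by
  intro m
  induction m with
  | zero =>
    intro p hc _
    have : p = 0 := by
      rw [← MvPolynomial.support_eq_empty]
      exact Finset.card_eq_zero.mp (Nat.le_zero.mp hc)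
    rw [this]
    exact dvd_zero _
  | succ m ih =>
    intro p hc hvan
    by_cases hs : p.support = ∅
    · rw [MvPolynomial.support_eq_empty.mp hs]
      exact dvd_zero _
    · obtain ⟨α₀, hα₀⟩ := Finset.nonempty_of_ne_empty hs
      obtain ⟨γ, hγN, hsep⟩ := exists_separating lam hne hcop N hN hrank p.support
      obtain ⟨β, hβ, hβne, hdeq⟩ := exists_partner γ p (hvan γ hγN) α₀ hα₀
      obtain ⟨k, hk⟩ := hsep α₀ hα₀ β hβ hdeq.symm
      set c := p.coeff α₀ with hcdef
      set b : MvPolynomial (Fin n) ℤ :=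
        MvPolynomial.monomial α₀ c - MvPolynomial.monomial β c with hb
      have hqb : (Xpow (lamPos lam) - Xpow (lamNeg lam)) ∣ b := by
        have hd := dvd_xpow_sub_xpow lam ⇑α₀ ⇑β k hk
        have hbe : b = MvPolynomial.C c * (Xpow ⇑α₀ - Xpow ⇑β) := by
          rw [hb, mul_sub, xpow_coe, xpow_coe, MvPolynomial.C_mul_monomial,
            MvPolynomial.C_mul_monomial, mul_one]
        rw [hbe]
        exact Dvd.dvd.mul_left hd _
      have hvan' : ∀ γ' ∈ N, evalAt γ' (p - b) = 0 := by
        intro γ' hγ'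
        have hsum : (∑ i, γ' i * α₀ i) = ∑ i, γ' i * β i := by
          have h0 := hN γ' hγ'
          have hz : ((∑ i, γ' i * α₀ i : ℕ) : ℤ) = ((∑ i, γ' i * β i : ℕ) : ℤ) := by
            push_cast
            have hstep : ∑ i, ((γ' i : ℤ) * (α₀ i : ℤ) - (γ' i : ℤ) * (β i : ℤ))
                = k * ∑ i, lam i * (γ' i : ℤ) := by
              rw [Finset.mul_sum]
              apply Finset.sum_congr rfl
              intro i _
              have := hk i
              nlinarith [hk i]
            rw [Finset.sum_sub_distrib] at hstep
            rw [h0, mul_zero] at hstep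
            linarith
          exact_mod_cast hz
        have hb0 : evalAt γ' b = 0 := by
          rw [hb, evalAt, MvPolynomial.eval₂_sub, ← evalAt, ← evalAt,
            evalAt_monomial, evalAt_monomial, hsum, sub_self]
        rw [evalAt, MvPolynomial.eval₂_sub, ← evalAt, ← evalAt, hvan γ' hγ', hb0, sub_zero]
      have hsupp : (p - b).support ⊆ p.support.erase α₀ := by
        intro δ hδ
        rw [MvPolynomial.mem_support_iff] at hδ
        have hcoeff : (p - b).coeff δ
            = p.coeff δ - ((if α₀ = δ then c else 0) - (if β = δ then c else 0)) := by
          simp [hb, MvPolynomial.coeff_sub, MvPolynomial.coeff_monomial]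
        rw [Finset.mem_erase, MvPolynomial.mem_support_iff]
        constructor
        · rintro rfl
          apply hδ
          rw [hcoeff, if_pos rfl, if_neg hβne]
          simp [hcdef]
        · intro h0
          apply hδ
          have hα₀δ : α₀ ≠ δ := by
            rintro rfl
            exact (MvPolynomial.mem_support_iff.mp hα₀) h0
          have hβδ : β ≠ δ := by
            rintro rfl
            exact (MvPolynomial.mem_support_iff.mp hβ) h0
          rw [hcoeff, if_neg hα₀δ, if_neg hβδ, h0]
          ring
      have hcard : (p - b).support.card ≤ m := by
        have h1 := Finset.card_le_card hsupp
        have h2 := Finset.card_erase_of_mem hα₀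
        omega
      have hdvd' := ih (p - b) hcard hvan'
      have := dvd_add hdvd' hqb
      simpa using this


/-- for `λ ≠ 0` with coprime coefficients and `N ⊆ 𝒩(λ) ∩ ℕ₀ⁿ` of rank
`n-1`, a polynomial `p` vanishes on `N` iff `X^{λ⁺} - X^{λ⁻}` divides `p`. -/
theorem vanishes_iff_dvd {n : ℕ} (lam : Fin n → ℤ) (hne : lam ≠ 0)
    (hcop : Finset.univ.gcd lam = 1)
    (N : Set (Fin n → ℕ))
    (hN : ∀ γ ∈ N, ∑ i, lam i * (γ i : ℤ) = 0)
    (hrank : HasRank ((fun γ : Fin n → ℕ => fun i => ((γ i : ℕ) : ℚ)) '' N) (n - 1))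
    (p : MvPolynomial (Fin n) ℤ) :
    (∀ γ ∈ N, evalAt γ p = 0) ↔ (Xpow (lamPos lam) - Xpow (lamNeg lam)) ∣ p := by
  constructor
  · intro hvan
    exact forward_dvd lam hne hcop N hN hrank p.support.card p le_rfl hvan
  · rintro ⟨r, rfl⟩ γ hγ
    rw [evalAt, MvPolynomial.eval₂_mul, MvPolynomial.eval₂_sub, ← evalAt, ← evalAt, ← evalAt]
    have hx : evalAt γ (Xpow (lamPos lam)) = evalAt γ (Xpow (lamNeg lam)) := by
      rw [evalAt_Xpow, evalAt_Xpow]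
      congr 1
      have hz : ((∑ i, γ i * lamPos lam i : ℕ) : ℤ)
          = ((∑ i, γ i * lamNeg lam i : ℕ) : ℤ) := by
        push_cast
        have h0 := hN γ hγ
        rw [← sub_eq_zero, ← Finset.sum_sub_distrib, ← h0]
        apply Finset.sum_congr rfl
        intro i _
        have ht : ((lamPos lam i : ℕ) : ℤ) - ((lamNeg lam i : ℕ) : ℤ) = lam i := by
          simp only [lamPos, lamNeg]
          omega
        rw [← mul_sub, ht, mul_comm]
      exact_mod_cast hz
    rw [hx, sub_self, zero_mul]


end WordEquations
end
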